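/- For every f : (0,∞) → V, every s ∈ ℂ and every x > 0 such that for each k ∈ {1,…,q−1} the Möbius transformations g_k⁻¹ are defined (nonvanishing denominator) at both x and 1/x, the slow transfer operator commutes with the exterior symmetry Q: α_s(Q)(L_{s,χ}f)(x) = L_{s,χ}(α_s(Q)f)(x), where α_s(Q)f(y) := (y²)^(−s) χ(Q) f(1/y) for y > 0. -/

import Mathlib

/-!
STATEMENT 13: The slow transfer operator of a cofinite Hecke triangle group
commutes with the exterior symmetry induced by `Q = [[0,1],[1,0]]`:
`α_s(Q) ∘ L_{s,χ} = L_{s,χ} ∘ α_s(Q)` at points where everything is defined.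
-/

open Matrix Complex

noncomputable section

def SmatGL : GL (Fin 2) ℝ :=
  Matrix.GeneralLinearGroup.mkOfDetNeZero !![0, 1; -1, 0] (by norm_num [Matrix.det_fin_two_of])

def TmatGL (lam : ℝ) : GL (Fin 2) ℝ :=
  Matrix.GeneralLinearGroup.mkOfDetNeZero !![1, lam; 0, 1] (by norm_num [Matrix.det_fin_two_of])

def QmatGL : GL (Fin 2) ℝ :=
  Matrix.GeneralLinearGroup.mkOfDetNeZero !![0, 1; 1, 0] (by norm_num [Matrix.det_fin_two_of])

/-- The subgroup `Γ̃_λ` of `GL(2,ℝ)` generated by `S`, `T_λ` and `Q`. -/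
def HeckeTildeQ (lam : ℝ) : Subgroup (GL (Fin 2) ℝ) :=
  Subgroup.closure {SmatGL, TmatGL lam, QmatGL}

def SelQ (lam : ℝ) : HeckeTildeQ lam := ⟨SmatGL, Subgroup.subset_closure (by simp)⟩
def TelQ (lam : ℝ) : HeckeTildeQ lam := ⟨TmatGL lam, Subgroup.subset_closure (by simp)⟩
def Qel (lam : ℝ) : HeckeTildeQ lam := ⟨QmatGL, Subgroup.subset_closure (by simp)⟩

/-- The elements `g_k = ((T_λ S)^k S)⁻¹`. -/
def gkQ (lam : ℝ) (k : ℕ) : HeckeTildeQ lam := ((TelQ lam * SelQ lam) ^ k * SelQ lam)⁻¹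

/-- Möbius action of `g ∈ GL(2,ℝ)` on `ℝ` (where the denominator is nonzero). -/
def moebGL (g : GL (Fin 2) ℝ) (x : ℝ) : ℝ :=
  ((g : Matrix (Fin 2) (Fin 2) ℝ) 0 0 * x + (g : Matrix (Fin 2) (Fin 2) ℝ) 0 1) /
    ((g : Matrix (Fin 2) (Fin 2) ℝ) 1 0 * x + (g : Matrix (Fin 2) (Fin 2) ℝ) 1 1)

/-- The denominator `cx + d` of the Möbius action. -/
def denomGL (g : GL (Fin 2) ℝ) (x : ℝ) : ℝ :=
  (g : Matrix (Fin 2) (Fin 2) ℝ) 1 0 * x + (g : Matrix (Fin 2) (Fin 2) ℝ) 1 1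

/-- `j_s(g,x) = (|det g|·(cx+d)^{−2})^s`, principal complex power of a positive real. -/
def jGL (s : ℂ) (g : GL (Fin 2) ℝ) (x : ℝ) : ℂ :=
  (((|(g : Matrix (Fin 2) (Fin 2) ℝ).det| * ((denomGL g x) ^ 2)⁻¹) : ℝ) : ℂ) ^ s


def Smm : Matrix (Fin 2) (Fin 2) ℝ := !![0,1;-1,0]
def Qmm : Matrix (Fin 2) (Fin 2) ℝ := !![0,1;1,0]
def Mmm (lam : ℝ) : Matrix (Fin 2) (Fin 2) ℝ := !![-lam,1;-1,0]
def Nmm (lam : ℝ) : Matrix (Fin 2) (Fin 2) ℝ := !![0,-1;1,-lam]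

lemma TS_eq (lam : ℝ) : !![1,lam;0,1] * Smm = Mmm lam := by
  ext i j; fin_cases i <;> fin_cases j <;> simp [Smm, Mmm, Matrix.mul_apply, Fin.sum_univ_two]

lemma M_sq (lam : ℝ) : Mmm lam * Mmm lam = -lam • Mmm lam - 1 := by
  ext i j; fin_cases i <;> fin_cases j <;>
    simp [Mmm, Matrix.mul_apply, Fin.sum_univ_two, Matrix.one_apply] <;> ring

lemma N_mul_M (lam : ℝ) : Nmm lam * Mmm lam = 1 := by
  ext i j; fin_cases i <;> fin_cases j <;>
    simp [Mmm, Nmm, Matrix.mul_apply, Fin.sum_univ_two, Matrix.one_apply] <;> ring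

lemma M_mul_N (lam : ℝ) : Mmm lam * Nmm lam = 1 := by
  ext i j; fin_cases i <;> fin_cases j <;>
    simp [Mmm, Nmm, Matrix.mul_apply, Fin.sum_univ_two, Matrix.one_apply] <;> ring

lemma Q_mul_Q : Qmm * Qmm = 1 := by
  ext i j; fin_cases i <;> fin_cases j <;>
    simp [Qmm, Matrix.mul_apply, Fin.sum_univ_two, Matrix.one_apply]

lemma QMQ (lam : ℝ) : Qmm * Mmm lam * Qmm = Nmm lam := by
  ext i j; fin_cases i <;> fin_cases j <;>
    simp [Qmm, Mmm, Nmm, Matrix.mul_apply, Fin.sum_univ_two]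

lemma QSQ : Qmm * Smm * Qmm = -Smm := by
  ext i j; fin_cases i <;> fin_cases j <;>
    simp [Qmm, Smm, Matrix.mul_apply, Fin.sum_univ_two]

lemma S_sq : Smm * Smm = -1 := by
  ext i j; fin_cases i <;> fin_cases j <;>
    simp [Smm, Matrix.mul_apply, Fin.sum_univ_two, Matrix.one_apply]

/-- Chebyshev-type coefficient. -/
def cheb (q : ℕ) (k : ℕ) : ℝ :=
  (-1 : ℝ)^(k+1) * (Real.sin (k * (Real.pi / q)) / Real.sin (Real.pi / q))

lemma sin_piq_pos {q : ℕ} (hq : 3 ≤ q) : 0 < Real.sin (Real.pi / q) := by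
  apply Real.sin_pos_of_pos_of_lt_pi
  · positivity
  · have h1 : (1:ℝ) < q := by exact_mod_cast by omega
    calc Real.pi / q < Real.pi / 1 := by
          apply div_lt_div_of_pos_left Real.pi_pos (by norm_num) h1
      _ = Real.pi := by norm_num

lemma cheb_zero (q : ℕ) : cheb q 0 = 0 := by simp [cheb]

lemma cheb_one {q : ℕ} (hq : 3 ≤ q) : cheb q 1 = 1 := by
  simp [cheb, div_self (sin_piq_pos hq).ne']

lemma cheb_rec {q : ℕ} (hq : 3 ≤ q) (k : ℕ) :
    cheb q (k+2) = -(2 * Real.cos (Real.pi/q)) * cheb q (k+1) - cheb q k := by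
  have hs := (sin_piq_pos hq).ne'
  set t := Real.pi / q
  have key : Real.sin ((k+2) * t) = 2 * Real.cos t * Real.sin ((k+1)*t) - Real.sin (k*t) := by
    have h1 : ((k:ℝ)+2) * t = (k+1)*t + t := by ring
    have h2 : (k:ℝ) * t = (k+1)*t - t := by ring
    rw [h1, h2, Real.sin_add, Real.sin_sub]; ring
  simp only [cheb]
  push_cast
  rw [key]
  simp only [t]
  field_simp
  ring

lemma Mpow {q : ℕ} (hq : 3 ≤ q) (lam : ℝ) (hlam : lam = 2 * Real.cos (Real.pi / q)) (k : ℕ) :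
    (Mmm lam)^(k+1) = cheb q (k+1) • Mmm lam - cheb q k • (1 : Matrix (Fin 2) (Fin 2) ℝ) := by
  induction k with
  | zero => simp [cheb_zero, cheb_one hq]
  | succ n ih =>
      have : (Mmm lam)^(n+2) = Mmm lam * (Mmm lam)^(n+1) := by rw [← pow_succ']
      rw [this, ih, mul_sub, mul_smul_comm, mul_smul_comm, M_sq, mul_one,
        cheb_rec hq n, ← hlam]
      ext i j
      simp [Matrix.sub_apply, Matrix.smul_apply, Matrix.one_apply, Matrix.neg_apply]
      split_ifs <;> ring

lemma cheb_q {q : ℕ} (hq : 3 ≤ q) : cheb q q = 0 := by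
  have hq0 : (q:ℝ) ≠ 0 := by positivity
  have : (q:ℝ) * (Real.pi / q) = Real.pi := by field_simp
  simp [cheb, this, Real.sin_pi]

lemma cheb_qsub1 {q : ℕ} (hq : 3 ≤ q) : cheb q (q-1) = (-1:ℝ)^q := by
  have hq0 : (q:ℝ) ≠ 0 := by positivity
  have hcast : ((q-1 : ℕ) : ℝ) = (q:ℝ) - 1 := by
    have : 1 ≤ q := by omega
    push_cast [this]; ring
  have harg : ((q-1:ℕ):ℝ) * (Real.pi / q) = Real.pi - Real.pi / q := by
    rw [hcast]; field_simp
  have hpow : (-1:ℝ)^(q-1+1) = (-1:ℝ)^q := by congr 1; omega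
  rw [cheb, harg, Real.sin_pi_sub, div_self (sin_piq_pos hq).ne', hpow, mul_one]

lemma Mpow_q {q : ℕ} (hq : 3 ≤ q) (lam : ℝ) (hlam : lam = 2 * Real.cos (Real.pi / q)) :
    (Mmm lam)^q = ((-1:ℝ)^(q+1)) • (1 : Matrix (Fin 2) (Fin 2) ℝ) := by
  have h1 : q = (q-1)+1 := by omega
  rw [h1, Mpow hq lam hlam (q-1), ← h1, cheb_q hq, cheb_qsub1 hq]
  simp [← neg_smul]
  ring_nf

lemma QMkQ (lam : ℝ) (k : ℕ) : Qmm * (Mmm lam)^k * Qmm = (Nmm lam)^k := by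
  induction k with
  | zero => simpa using Q_mul_Q
  | succ n ih =>
      have : Qmm * Mmm lam ^ (n+1) * Qmm = (Qmm * (Mmm lam)^n * Qmm) * (Qmm * Mmm lam * Qmm) := by
        rw [pow_succ]
        have h := Q_mul_Q
        calc Qmm * (Mmm lam ^ n * Mmm lam) * Qmm
            = Qmm * Mmm lam ^ n * (Qmm * Qmm) * Mmm lam * Qmm := by rw [h]; noncomm_ring
          _ = (Qmm * (Mmm lam)^n * Qmm) * (Qmm * Mmm lam * Qmm) := by noncomm_ring
      rw [this, ih, QMQ, pow_succ]

lemma Mpow_sub {q : ℕ} (hq : 3 ≤ q) (lam : ℝ) (hlam : lam = 2 * Real.cos (Real.pi / q))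
    (k : ℕ) (hk : k ≤ q) :
    (Mmm lam)^(q-k) = ((-1:ℝ)^(q+1)) • (Nmm lam)^k := by
  have hMN : (Mmm lam)^k * (Nmm lam)^k = 1 := by
    rw [← (Commute.mul_pow ?_)]
    · rw [M_mul_N, one_pow]
    · unfold Commute SemiconjBy
      rw [M_mul_N, N_mul_M]
  have h1 : (Mmm lam)^(q-k) * ((Mmm lam)^k * (Nmm lam)^k) = (Mmm lam)^q * (Nmm lam)^k := by
    rw [← mul_assoc, ← pow_add]
    congr 2
    omega
  rw [hMN, mul_one] at h1
  rw [h1, Mpow_q hq lam hlam, smul_mul_assoc, one_mul]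

lemma key_conj {q : ℕ} (hq : 3 ≤ q) (lam : ℝ) (hlam : lam = 2 * Real.cos (Real.pi / q))
    (k : ℕ) (hk : k ≤ q) :
    Qmm * ((Mmm lam)^k * Smm) * Qmm = ((-1:ℝ)^q) • ((Mmm lam)^(q-k) * Smm) := by
  have lhs : Qmm * ((Mmm lam)^k * Smm) * Qmm = (Nmm lam)^k * (-Smm) := by
    calc Qmm * ((Mmm lam)^k * Smm) * Qmm
        = (Qmm * (Mmm lam)^k * Qmm) * (Qmm * Smm * Qmm) := by
          rw [show Qmm * (Mmm lam ^ k * Smm) * Qmm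
              = Qmm * (Mmm lam)^k * (Qmm * Qmm) * Smm * Qmm by rw [Q_mul_Q]; noncomm_ring]
          noncomm_ring
      _ = (Nmm lam)^k * (-Smm) := by rw [QMkQ, QSQ]
  rw [lhs, Mpow_sub hq lam hlam k hk, smul_mul_assoc, smul_smul]
  have : (-1:ℝ)^q * (-1:ℝ)^(q+1) = -1 := by
    rw [← pow_add]
    have : q + (q+1) = 2*q+1 := by omega
    rw [this, pow_succ, pow_mul]
    norm_num
  rw [this, neg_one_smul, mul_neg]

lemma SmatGL_val : (SmatGL : Matrix (Fin 2) (Fin 2) ℝ) = Smm := rfl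
lemma TmatGL_val (lam : ℝ) : (TmatGL lam : Matrix (Fin 2) (Fin 2) ℝ) = !![1,lam;0,1] := rfl
lemma QmatGL_val : (QmatGL : Matrix (Fin 2) (Fin 2) ℝ) = Qmm := rfl

lemma coe_hk (lam : ℝ) (k : ℕ) :
    ((((gkQ lam k)⁻¹ : HeckeTildeQ lam) : GL (Fin 2) ℝ) : Matrix (Fin 2) (Fin 2) ℝ)
      = (Mmm lam)^k * Smm := by
  rw [gkQ, inv_inv]
  push_cast
  show (!![1,lam;0,1] * Smm)^k * Smm = _
  rw [TS_eq]

lemma Qel_sq (lam : ℝ) : Qel lam * Qel lam = 1 := by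
  apply Subtype.ext
  apply Units.ext
  push_cast [Qel]
  exact Q_mul_Q

lemma neg_mem (lam : ℝ) : (-1 : GL (Fin 2) ℝ) ∈ HeckeTildeQ lam := by
  have h : (SelQ lam * SelQ lam : HeckeTildeQ lam).val = (-1 : GL (Fin 2) ℝ) := by
    apply Units.ext
    push_cast [SelQ]
    exact S_sq
  rw [← h]; exact (SelQ lam * SelQ lam).2

lemma group_conj {q : ℕ} (hq : 3 ≤ q) (lam : ℝ) (hlam : lam = 2 * Real.cos (Real.pi / q))
    (k : ℕ) (hk : k ≤ q) :
    (Qel lam) * (gkQ lam k)⁻¹ * (Qel lam)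
      = (⟨-1, neg_mem lam⟩ : HeckeTildeQ lam)^q * (gkQ lam (q-k))⁻¹ := by
  apply Subtype.ext
  apply Units.ext
  show Qmm * ((((gkQ lam k)⁻¹ : HeckeTildeQ lam) : GL (Fin 2) ℝ) : Matrix (Fin 2) (Fin 2) ℝ) * Qmm
      = (((-1 : GL (Fin 2) ℝ)^q : GL (Fin 2) ℝ) : Matrix (Fin 2) (Fin 2) ℝ)
        * ((((gkQ lam (q-k))⁻¹ : HeckeTildeQ lam) : GL (Fin 2) ℝ) : Matrix (Fin 2) (Fin 2) ℝ)
  rw [coe_hk, coe_hk, Units.val_pow_eq_pow_val, Units.val_neg, Units.val_one,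
    key_conj hq lam hlam k hk]
  have h5 : (-1 : Matrix (Fin 2) (Fin 2) ℝ) = (-1:ℝ) • 1 := by simp
  rw [h5, smul_pow, one_pow, smul_mul_assoc, one_mul]

lemma chi_comm {q : ℕ} (hq : 3 ≤ q) (lam : ℝ) (hlam : lam = 2 * Real.cos (Real.pi / q))
    {V : Type} [NormedAddCommGroup V] [InnerProductSpace ℂ V]
    (χ : HeckeTildeQ lam →* (V ≃ₗᵢ[ℂ] V))
    (hχneg : ∀ h : (-1 : GL (Fin 2) ℝ) ∈ HeckeTildeQ lam, χ ⟨-1, h⟩ = 1)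
    (k : ℕ) (hk : k ≤ q) :
    χ (Qel lam) * χ (gkQ lam k) = χ (gkQ lam (q-k)) * χ (Qel lam) := by
  set u := χ (Qel lam) with hu
  set a := χ (gkQ lam k)
  set b := χ (gkQ lam (q-k))
  have huu : u * u = 1 := by rw [hu, ← _root_.map_mul, Qel_sq, _root_.map_one]
  have huinv : u⁻¹ = u := inv_eq_of_mul_eq_one_right huu
  have hneg1 : χ (⟨-1, neg_mem lam⟩ : HeckeTildeQ lam) = 1 := hχneg _
  have h1 : u * a⁻¹ * u = b⁻¹ := by
    have h := congrArg χ (group_conj hq lam hlam k hk)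
    rw [_root_.map_mul, _root_.map_mul, _root_.map_mul, map_inv, map_inv, map_pow,
      hneg1, one_pow, one_mul] at h
    exact h
  have h2 : u * a * u = b := by
    have h := congrArg (·⁻¹) h1
    simp only [_root_.mul_inv_rev, inv_inv, huinv] at h
    rw [← mul_assoc] at h
    exact h
  calc u * a = (u * a * u) * u := by rw [mul_assoc, huu, mul_one]
    _ = b * u := by rw [h2]

lemma cpow_posreal {t : ℝ} (ht : 0 < t) (w : ℂ) :
    ((t : ℝ) : ℂ) ^ w = Complex.exp ((Real.log t : ℂ) * w) := by
  rw [Complex.cpow_def_of_ne_zero (by exact_mod_cast ht.ne'), Complex.ofReal_log ht.le]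

lemma scalar_key (s : ℂ) (x d1 d2 n : ℝ) (hx : x ≠ 0) (hd1 : d1 ≠ 0) (hd2 : d2 ≠ 0)
    (hn : n ≠ 0) (hrel : n^2 = x^2 * d1^2) :
    ((x^2 : ℝ) : ℂ)^(-s) * (((d1^2)⁻¹ : ℝ) : ℂ)^s
      = ((((d2^2)⁻¹ : ℝ)) : ℂ)^s * ((((n/d2)^2 : ℝ)) : ℂ)^(-s) := by
  have hx2 : (0:ℝ) < x^2 := by positivity
  have hd12 : (0:ℝ) < (d1^2)⁻¹ := by positivity
  have hd22 : (0:ℝ) < (d2^2)⁻¹ := by positivity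
  have hnd : (0:ℝ) < (n/d2)^2 := by positivity
  rw [cpow_posreal hx2, cpow_posreal hd12, cpow_posreal hd22, cpow_posreal hnd,
    ← Complex.exp_add, ← Complex.exp_add]
  congr 1
  have e1 : Real.log ((n/d2)^2) = Real.log (n^2) - Real.log (d2^2) := by
    rw [div_pow, Real.log_div (pow_ne_zero _ hn) (pow_ne_zero _ hd2)]
  have e2 : Real.log (n^2) = Real.log (x^2) + Real.log (d1^2) := by
    rw [hrel, Real.log_mul (by positivity) (by positivity)]
  rw [Real.log_inv, Real.log_inv, e1, e2]
  push_cast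
  ring

lemma det_MkS (lam : ℝ) (m : ℕ) : ((Mmm lam)^m * Smm).det = 1 := by
  rw [Matrix.det_mul, Matrix.det_pow]
  have h1 : (Mmm lam).det = 1 := by simp [Mmm, Matrix.det_fin_two_of]
  have h2 : Smm.det = 1 := by simp [Smm, Matrix.det_fin_two_of]
  rw [h1, h2, one_pow, one_mul]

lemma QAQ_eq (A : Matrix (Fin 2) (Fin 2) ℝ) :
    Qmm * A * Qmm = !![A 1 1, A 1 0; A 0 1, A 0 0] := by
  ext i j
  fin_cases i <;> fin_cases j <;>
    simp [Qmm, Matrix.mul_apply, Fin.sum_univ_two, Matrix.vecMul, dotProduct, Matrix.vecHead, Matrix.vecTail]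

lemma B_eq {q : ℕ} (hq : 3 ≤ q) (lam : ℝ) (hlam : lam = 2 * Real.cos (Real.pi / q))
    (k : ℕ) (hk : k ≤ q) :
    (Mmm lam)^(q-k) * Smm
      = ((-1:ℝ)^q) • !![((Mmm lam)^k * Smm) 1 1, ((Mmm lam)^k * Smm) 1 0;
          ((Mmm lam)^k * Smm) 0 1, ((Mmm lam)^k * Smm) 0 0] := by
  have h := key_conj hq lam hlam k hk
  have hε : ((-1:ℝ)^q) • ((-1:ℝ)^q) • ((Mmm lam)^(q-k) * Smm) = (Mmm lam)^(q-k) * Smm := by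
    rw [smul_smul, ← pow_add]
    have : q + q = 2*q := by omega
    rw [this, pow_mul]
    norm_num
  rw [← hε, ← h, QAQ_eq]

lemma term_main {q : ℕ} (hq : 3 ≤ q) (lam : ℝ) (hlam : lam = 2 * Real.cos (Real.pi / q))
    (s : ℂ) (x : ℝ) (hx : 0 < x) (k : ℕ) (hk1 : 1 ≤ k) (hk2 : k ≤ q - 1)
    (h1 : denomGL (((gkQ lam k)⁻¹ : HeckeTildeQ lam) : GL (Fin 2) ℝ) (1/x) ≠ 0)
    (h2 : denomGL (((gkQ lam (q-k))⁻¹ : HeckeTildeQ lam) : GL (Fin 2) ℝ) x ≠ 0) :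
    moebGL (((gkQ lam k)⁻¹ : HeckeTildeQ lam) : GL (Fin 2) ℝ) (1/x)
      = 1 / moebGL (((gkQ lam (q-k))⁻¹ : HeckeTildeQ lam) : GL (Fin 2) ℝ) x
    ∧ ((x^2 : ℝ) : ℂ)^(-s) * jGL s (((gkQ lam k)⁻¹ : HeckeTildeQ lam) : GL (Fin 2) ℝ) (1/x)
      = jGL s (((gkQ lam (q-k))⁻¹ : HeckeTildeQ lam) : GL (Fin 2) ℝ) x
        * (((moebGL (((gkQ lam (q-k))⁻¹ : HeckeTildeQ lam) : GL (Fin 2) ℝ) x)^2 : ℝ) : ℂ)^(-s) := by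
  have hkq : k ≤ q := by omega
  have hx0 : x ≠ 0 := hx.ne'
  simp only [moebGL, denomGL, jGL, coe_hk, det_MkS, abs_one, one_mul] at *
  rw [B_eq hq lam hlam k hkq] at *
  simp only [Matrix.smul_apply, smul_eq_mul] at *
  simp only [Matrix.cons_val_one, Matrix.cons_val_zero, Matrix.head_cons, Matrix.of_apply,
    Matrix.cons_val', Matrix.empty_val', Matrix.cons_val_fin_one, Matrix.head_fin_const] at *
  set a := ((Mmm lam)^k * Smm) 0 0 with ha
  set b := ((Mmm lam)^k * Smm) 0 1 with hb
  set c := ((Mmm lam)^k * Smm) 1 0 with hc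
  set d := ((Mmm lam)^k * Smm) 1 1 with hd
  set ε := ((-1:ℝ)^q) with hε
  have hε2 : ε^2 = 1 := by
    rw [hε, ← pow_mul]
    have : q * 2 = 2*q := by omega
    rw [this, pow_mul]; norm_num
  have hεne : ε ≠ 0 := by
    intro h0
    rw [h0] at hε2; simp at hε2
  -- now h1 : c * (1/x) + d ≠ 0, h2 : ε * b * x + ε * a ≠ 0 (roughly)
  have hba : b*x + a ≠ 0 := by
    intro h0
    apply h2
    have : ε * b * x + ε * a = ε * (b*x + a) := by ring
    rw [this, h0, mul_zero]
  have hdc : ε * d * x + ε * c ≠ 0 := by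
    have hx1 : x * (c * (1/x) + d) = c + d * x := by field_simp
    intro h0
    apply h1
    have h3 : ε * d * x + ε * c = ε * (x * (c * (1/x) + d)) := by rw [hx1]; ring
    rw [h3] at h0
    rcases mul_eq_zero.mp h0 with h4 | h4
    · exact absurd h4 hεne
    · rcases mul_eq_zero.mp h4 with h5 | h5
      · exact absurd h5 hx0
      · exact h5
  constructor
  · rw [one_div_div, div_eq_div_iff h1 hdc]
    field_simp
    ring
  · have hrel : (ε * d * x + ε * c)^2 = x^2 * (c * (1/x) + d)^2 := by
      have hx1 : x * (c * (1/x) + d) = c + d * x := by field_simp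
      have e1 : (ε * d * x + ε * c)^2 = ε^2 * (c + d*x)^2 := by ring
      rw [e1, hε2, one_mul, ← mul_pow, hx1]
    have := scalar_key s x (c * (1/x) + d) (ε * b * x + ε * a) (ε * d * x + ε * c)
      hx0 h1 h2 hdc hrel
    convert this using 3 <;> ring
theorem slowTO_Q_equivariant (q : ℕ) (hq : 3 ≤ q) (lam : ℝ)
    (hlam : lam = 2 * Real.cos (Real.pi / q))
    {V : Type} [NormedAddCommGroup V] [InnerProductSpace ℂ V] [FiniteDimensional ℂ V]
    (χ : HeckeTildeQ lam →* (V ≃ₗᵢ[ℂ] V))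
    (hχneg : ∀ h : (-1 : GL (Fin 2) ℝ) ∈ HeckeTildeQ lam, χ ⟨-1, h⟩ = 1)
    (s : ℂ) (f : ℝ → V) (x : ℝ) (hx : 0 < x)
    (hdef : ∀ k ∈ Finset.Icc 1 (q - 1),
      denomGL (((gkQ lam k)⁻¹ : HeckeTildeQ lam) : GL (Fin 2) ℝ) x ≠ 0 ∧
      denomGL (((gkQ lam k)⁻¹ : HeckeTildeQ lam) : GL (Fin 2) ℝ) (1 / x) ≠ 0) :
    let αQ : (ℝ → V) → ℝ → V := fun g y => (((y ^ 2 : ℝ) : ℂ) ^ (-s)) • χ (Qel lam) (g (1 / y))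
    let Lop : (ℝ → V) → ℝ → V := fun g y =>
      ∑ k ∈ Finset.Icc 1 (q - 1),
        jGL s (((gkQ lam k)⁻¹ : HeckeTildeQ lam) : GL (Fin 2) ℝ) y •
          χ (gkQ lam k) (g (moebGL (((gkQ lam k)⁻¹ : HeckeTildeQ lam) : GL (Fin 2) ℝ) y))
    αQ (Lop f) x = Lop (αQ f) x := by

  intro αQ Lop
  simp only [αQ, Lop]
  rw [map_sum, Finset.smul_sum]
  simp only [LinearIsometryEquiv.map_smul, smul_smul]
  refine Finset.sum_nbij' (i := fun k => q - k) (j := fun k => q - k)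
    (fun a ha => ?_) (fun a ha => ?_) (fun a ha => ?_) (fun a ha => ?_) (fun k hk => ?_)
  · simp only [Finset.mem_Icc] at *; omega
  · simp only [Finset.mem_Icc] at *; omega
  · simp only [Finset.mem_Icc] at *; omega
  · simp only [Finset.mem_Icc] at *; omega
  · simp only [Finset.mem_Icc] at hk
    obtain ⟨hk1, hk2⟩ := hk
    have hmem : q - k ∈ Finset.Icc 1 (q-1) := by simp only [Finset.mem_Icc]; omega
    have h1 := (hdef k (by simp only [Finset.mem_Icc]; omega)).2
    have h2 := (hdef (q-k) hmem).1
    obtain ⟨hmoeb, hscal⟩ := term_main hq lam hlam s x hx k hk1 hk2 h1 h2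
    have hcomp := chi_comm hq lam hlam χ hχneg k (by omega)
    rw [hmoeb, hscal]
    congr 1
    exact DFunLike.congr_fun hcomp _
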